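/- Fix q ∈ ℝ^d with q ≠ 0, η > 0, x ∈ ℝ^d, and y ∈ {−1, 1}, and write p = ⟨q, x⟩. Consider the exponential loss ℓ(w) = e^{−y ⟨q,w⟩} with conjugate ℓ*(z) = sup_w (⟨z,w⟩ − ℓ(w)), and define H(z) = (η/2)‖x/η − z‖² + ℓ*(z). Let g = −y e^{−y p} q and let z = (1/η) s(1) q where s(1) = (p y − ln(η ‖q‖² + e^{p y})) / (‖q‖² y) is the IWA scaling. Then H(z) ≤ H(g). -/

import Mathlib

open scoped RealInnerProductSpace

lemma lstar_eval (d : ℕ) (q : EuclideanSpace ℝ (Fin d)) (hq : q ≠ 0)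
    (y : ℝ) (hy2 : y * y = 1) (β : ℝ) (hβ : 0 < β) :
    (⨆ w : EuclideanSpace ℝ (Fin d),
      ((⟪(-(y * β)) • q, w⟫ - Real.exp (-(y * ⟪q, w⟫)) : ℝ) : EReal))
      = ((β * Real.log β - β : ℝ) : EReal) := by
  have hqn : (0:ℝ) < ‖q‖ := norm_pos_iff.mpr hq
  have hq2 : (0:ℝ) < ‖q‖ ^ 2 := by positivity
  have hQ : (‖q‖:ℝ) ^ 2 ≠ 0 := ne_of_gt hq2
  apply le_antisymm
  · apply iSup_le
    intro w
    rw [EReal.coe_le_coe_iff]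
    rw [real_inner_smul_left]
    set u : ℝ := y * ⟪q, w⟫ with hu
    have h1 : β * Real.exp (-u - Real.log β) = Real.exp (-u) := by
      rw [Real.exp_sub, Real.exp_log hβ]; field_simp
    have h2 := Real.add_one_le_exp (-u - Real.log β)
    nlinarith [mul_le_mul_of_nonneg_left h2 hβ.le]
  · have hval : (⟪(-(y * β)) • q, ((-(y * Real.log β)) / ‖q‖ ^ 2) • q⟫
        - Real.exp (-(y * ⟪q, ((-(y * Real.log β)) / ‖q‖ ^ 2) • q⟫)) : ℝ)
        = β * Real.log β - β := by
      rw [real_inner_smul_left, real_inner_smul_right, real_inner_self_eq_norm_sq,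
        div_mul_cancel₀ _ hQ]
      have h3 : -(y * -(y * Real.log β)) = Real.log β := by
        linear_combination Real.log β * hy2
      rw [h3, Real.exp_log hβ]
      linear_combination (β * Real.log β) * hy2
    calc ((β * Real.log β - β : ℝ) : EReal)
        = ((⟪(-(y * β)) • q, ((-(y * Real.log β)) / ‖q‖ ^ 2) • q⟫
            - Real.exp (-(y * ⟪q, ((-(y * Real.log β)) / ‖q‖ ^ 2) • q⟫)) : ℝ) : EReal) := by
          rw [hval]
      _ ≤ _ := le_iSup (fun w => ((⟪(-(y * β)) • q, w⟫ - Real.exp (-(y * ⟪q, w⟫)) : ℝ) : EReal)) _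

lemma main_ineq (c m : ℝ) (hc : 0 < c) :
    c / 2 * ((Real.log (c + Real.exp m) - m) / c) ^ 2
      + m * ((Real.log (c + Real.exp m) - m) / c)
      + ((Real.log (c + Real.exp m) - m) / c) * Real.log ((Real.log (c + Real.exp m) - m) / c)
      - ((Real.log (c + Real.exp m) - m) / c)
    ≤ c / 2 * (Real.exp (-m)) ^ 2 + m * Real.exp (-m)
      + Real.exp (-m) * Real.log (Real.exp (-m)) - Real.exp (-m) := by
  set t : ℝ := c * Real.exp (-m) with htdef
  have hem : (0:ℝ) < Real.exp m := Real.exp_pos m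
  have ht : 0 < t := by positivity
  have hL : Real.log (c + Real.exp m) - m = Real.log (1 + t) := by
    have : c + Real.exp m = (1 + t) * Real.exp m := by
      rw [htdef]; rw [add_mul, one_mul, mul_assoc, ← Real.exp_add, neg_add_cancel, Real.exp_zero, mul_one]; ring
    rw [this, Real.log_mul (by positivity) (ne_of_gt hem), Real.log_exp]; ring
  set βz : ℝ := (Real.log (c + Real.exp m) - m) / c with hβzdef
  set βg : ℝ := Real.exp (-m) with hβgdef
  have h1t : (0:ℝ) < 1 + t := by linarith
  have hlogpos : 0 < Real.log (1 + t) := Real.log_pos (by linarith)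
  have hβz : 0 < βz := by rw [hβzdef, hL]; positivity
  have hβg : 0 < βg := Real.exp_pos _
  -- log(1+t) ≤ t
  have hup : Real.log (1 + t) ≤ t := by
    have := Real.log_le_sub_one_of_pos h1t; linarith
  -- t/(1+t) ≤ log(1+t)
  have hlow : t / (1 + t) ≤ Real.log (1 + t) := by
    have h := Real.log_le_sub_one_of_pos (inv_pos.mpr h1t)
    rw [Real.log_inv] at h
    have h2 : (1 + t)⁻¹ - 1 = -(t / (1 + t)) := by field_simp; ring
    linarith [h2 ▸ h]
  -- βz ≤ βg
  have hβzg : βz ≤ βg := by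
    rw [hβzdef, hL, hβgdef]
    rw [div_le_iff₀ hc]
    calc Real.log (1 + t) ≤ t := hup
    _ = Real.exp (-m) * c := by rw [htdef]; ring
  -- derivative at βz nonneg : c*βz + m + log βz ≥ 0
  have hcβz : c * βz = Real.log (1 + t) := by
    rw [hβzdef, hL]; field_simp
  have hβz_ge : Real.exp (-m) / (1 + t) ≤ βz := by
    rw [hβzdef, hL, le_div_iff₀ hc]
    calc Real.exp (-m) / (1 + t) * c = t / (1 + t) := by rw [htdef]; ring
    _ ≤ Real.log (1 + t) := hlow
  have hlogβz : -m - Real.log (1 + t) ≤ Real.log βz := by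
    have h := Real.log_le_log (by positivity) hβz_ge
    rw [Real.log_div (ne_of_gt hβg) (ne_of_gt h1t), Real.log_exp] at h
    linarith
  have hderiv : 0 ≤ c * βz + m + Real.log βz := by
    rw [hcβz]; linarith
  -- convexity: βg*log βg - βz*log βz ≥ (βg - βz)*(log βz + 1)
  have hconv : (βg - βz) * (Real.log βz + 1) ≤ βg * Real.log βg - βz * Real.log βz := by
    have h := Real.log_le_sub_one_of_pos (div_pos hβz hβg)
    rw [Real.log_div (ne_of_gt hβz) (ne_of_gt hβg)] at h
    have h2 : βz / βg * βg = βz := by field_simp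
    nlinarith [mul_le_mul_of_nonneg_left h hβg.le]
  nlinarith [mul_nonneg (sub_nonneg.mpr hβzg) hderiv, sq_nonneg (βg - βz), hc]

open scoped RealInnerProductSpace

/-- The IWA dual vector for the exponential loss `ℓ(w) = e^{-y⟨q,w⟩}`,
`y ∈ {-1,1}`, satisfies `H(z) ≤ H(g)`, where `g = -y e^{-yp} q` is the gradient
at `x`, `z = (1/η) s(1) q` with `s(1) = (py - ln(η‖q‖² + e^{py}))/(‖q‖² y)` the
IWA scaling, and `H(z) = (η/2)‖x/η - z‖² + ℓ*(z)`. -/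
theorem iwa_exponential_loss_H_le
    (d : ℕ) (q : EuclideanSpace ℝ (Fin d)) (hq : q ≠ 0) (η : ℝ) (hη : 0 < η)
    (x : EuclideanSpace ℝ (Fin d)) (y : ℝ) (hy : y = -1 ∨ y = 1)
    (p : ℝ) (hp : p = ⟪q, x⟫)
    (lstar : EuclideanSpace ℝ (Fin d) → EReal)
    (hlstar : ∀ zz, lstar zz
      = ⨆ w, ((⟪zz, w⟫ - Real.exp (-(y * ⟪q, w⟫)) : ℝ) : EReal))
    (H : EuclideanSpace ℝ (Fin d) → EReal)
    (hH : ∀ zz, H zz = ((η / 2 * ‖η⁻¹ • x - zz‖ ^ 2 : ℝ) : EReal) + lstar zz)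
    (g z : EuclideanSpace ℝ (Fin d))
    (hg : g = (-(y * Real.exp (-(y * p)))) • q)
    (hz : z = (η⁻¹ * ((p * y - Real.log (η * ‖q‖ ^ 2 + Real.exp (p * y)))
      / (‖q‖ ^ 2 * y))) • q) :
    H z ≤ H g := by
  have hy2 : y * y = 1 := by rcases hy with h | h <;> subst h <;> norm_num
  have hy0 : y ≠ 0 := by rcases hy with h | h <;> subst h <;> norm_num
  have hqn : (0:ℝ) < ‖q‖ := norm_pos_iff.mpr hq
  have hq2 : (0:ℝ) < ‖q‖ ^ 2 := by positivity
  have hηinv : η * η⁻¹ = 1 := mul_inv_cancel₀ (ne_of_gt hη)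
  set c : ℝ := η * ‖q‖ ^ 2 with hcdef
  have hc : 0 < c := by positivity
  set m : ℝ := p * y with hmdef
  set βg : ℝ := Real.exp (-m) with hβgdef
  set βz : ℝ := (Real.log (c + Real.exp m) - m) / c with hβzdef
  have hβzpos : 0 < βz := by
    apply div_pos _ hc
    have h1 : Real.exp m < c + Real.exp m := by linarith [Real.exp_pos m]
    have := Real.log_lt_log (Real.exp_pos m) h1
    rw [Real.log_exp] at this
    linarith
  have hβgpos : 0 < βg := Real.exp_pos _
  -- vector forms
  have hgv : g = (-(y * βg)) • q := by
    rw [hg, hβgdef, hmdef, mul_comm p y]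
  have hzv : z = (-(y * βz)) • q := by
    rw [hz]
    congr 1
    rw [hβzdef, hmdef, hcdef]
    field_simp
    ring_nf
    linear_combination (Real.log (η * ‖q‖ ^ 2 + Real.exp (p * y)) - p * y) * hy2
  -- energy expansion
  have hE : ∀ β : ℝ, η / 2 * ‖η⁻¹ • x - (-(y * β)) • q‖ ^ 2
      = η / 2 * ‖η⁻¹ • x‖ ^ 2 + y * β * p + c / 2 * β ^ 2 := by
    intro β
    rw [norm_sub_sq_real, real_inner_smul_left, real_inner_smul_right,
      real_inner_comm q x, ← hp, norm_smul (-(y * β)) q, mul_pow, Real.norm_eq_abs, sq_abs, hcdef]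
    linear_combination (y * β * p) * hηinv + (η * ‖q‖ ^ 2 * β ^ 2 / 2) * hy2
  -- evaluate H
  have hHz : H z = ((η / 2 * ‖η⁻¹ • x - (-(y * βz)) • q‖ ^ 2
      + (βz * Real.log βz - βz) : ℝ) : EReal) := by
    rw [hH, hzv, hlstar, lstar_eval d q hq y hy2 βz hβzpos, ← EReal.coe_add]
  have hHg : H g = ((η / 2 * ‖η⁻¹ • x - (-(y * βg)) • q‖ ^ 2
      + (βg * Real.log βg - βg) : ℝ) : EReal) := by
    rw [hH, hgv, hlstar, lstar_eval d q hq y hy2 βg hβgpos, ← EReal.coe_add]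
  rw [hHz, hHg, EReal.coe_le_coe_iff, hE βz, hE βg]
  have hmain := main_ineq c m hc
  rw [← hβzdef, ← hβgdef] at hmain
  nlinarith [hmain]
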